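/- For every positive integer m, the L² norm on [0,1] of the m-th derivative of p_m satisfies ‖p_m^{(m)}‖² = (2m-2)!(2m-1)!/(m-1)!². -/

import Mathlib

open MeasureTheory intervalIntegral

/-- The regularised incomplete Beta function `I(m,m;x)`. -/
noncomputable def pBeta (m : ℕ) (x : ℝ) : ℝ :=
  (((2*m-1).factorial : ℝ) / ((m-1).factorial : ℝ)^2) *
    ∫ y in (0:ℝ)..x, y^(m-1) * (1-y)^(m-1)

open Polynomial in
lemma iteratedDeriv_polyEval (k : ℕ) (p : ℝ[X]) :
    iteratedDeriv k (fun x => p.eval x) = fun x => (derivative^[k] p).eval x := by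
  induction k generalizing p with
  | zero => simp
  | succ k ih =>
    rw [iteratedDeriv_succ']
    have h : deriv (fun x => p.eval x) = fun x => (derivative p).eval x := by
      funext x; exact Polynomial.deriv (p := p)
    rw [h, ih, Function.iterate_succ_apply]

open Polynomial in
lemma poly_parts (P Q : ℝ[X]) (h0 : P.eval 0 = 0) (h1 : P.eval 1 = 0) :
    ∫ x in (0:ℝ)..1, (derivative P).eval x * Q.eval x
      = - ∫ x in (0:ℝ)..1, P.eval x * (derivative Q).eval x := by
  have h := intervalIntegral.integral_mul_deriv_eq_deriv_mul
    (a := (0:ℝ)) (b := (1:ℝ))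
    (u := fun x => P.eval x) (v := fun x => Q.eval x)
    (u' := fun x => (derivative P).eval x) (v' := fun x => (derivative Q).eval x)
    (fun x _ => P.hasDerivAt x) (fun x _ => Q.hasDerivAt x)
    (((derivative P).continuous_aeval).intervalIntegrable _ _)
    (((derivative Q).continuous_aeval).intervalIntegrable _ _)
  simp only [h0, h1, zero_mul, mul_zero, sub_zero, zero_sub] at h
  linarith [h]

lemma beta_nat (b a : ℕ) :
    ∫ x in (0:ℝ)..1, x^a * (1-x)^b
      = (a.factorial : ℝ) * (b.factorial : ℝ) / ((a+b+1).factorial : ℝ) := by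
  induction b generalizing a with
  | zero =>
    simp only [pow_zero, mul_one, integral_pow, one_pow, ne_eq]
    rw [Nat.factorial_succ]
    have : ((a:ℝ)+1) ≠ 0 := by positivity
    have h2 : ((a.factorial : ℝ)) ≠ 0 := by
      exact_mod_cast Nat.factorial_ne_zero a
    push_cast
    field_simp
    simp
  | succ b ih =>
    have hu : ∀ x ∈ Set.uIcc (0:ℝ) 1,
        HasDerivAt (fun x : ℝ => x^(a+1) / (a+1)) (x^a) x := by
      intro x _
      have := (hasDerivAt_pow (a+1) x).div_const ((a:ℝ)+1)
      simp only [Nat.cast_add, Nat.cast_one, Nat.add_sub_cancel] at this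
      refine this.congr_deriv ?_
      have ha : ((a:ℝ)+1) ≠ 0 := by positivity
      rw [mul_comm, mul_div_assoc, div_self ha, mul_one]
    have hv : ∀ x ∈ Set.uIcc (0:ℝ) 1,
        HasDerivAt (fun x : ℝ => (1-x)^(b+1)) (-(((b:ℝ)+1) * (1-x)^b)) x := by
      intro x _
      have h1 : HasDerivAt (fun x : ℝ => 1 - x) (-1) x := by
        simpa using (hasDerivAt_id x).const_sub 1
      have := (hasDerivAt_pow (b+1) (1-x)).comp x h1
      simp only [Nat.cast_add, Nat.cast_one, Nat.add_sub_cancel] at this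
      refine this.congr_deriv ?_
      ring
    have hparts := intervalIntegral.integral_mul_deriv_eq_deriv_mul
      (u := fun x : ℝ => x^(a+1) / (a+1)) (v := fun x : ℝ => (1-x)^(b+1))
      (u' := fun x : ℝ => x^a) (v' := fun x : ℝ => -(((b:ℝ)+1) * (1-x)^b))
      hu hv ((continuous_pow a).intervalIntegrable _ _)
      (Continuous.intervalIntegrable (by continuity) _ _)
    simp only [sub_self, zero_pow (Nat.succ_ne_zero b), mul_zero, sub_zero,
      one_pow, zero_div, zero_mul, zero_sub, zero_pow (Nat.succ_ne_zero a),
      one_div] at hparts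
    -- hparts : ∫ x in 0..1, x^(a+1)/(a+1) * -((b+1)*(1-x)^b) = - ∫ x^a * (1-x)^(b+1)
    have key : ∫ x in (0:ℝ)..1, x^a * (1-x)^(b+1)
        = (((b:ℝ)+1) / ((a:ℝ)+1)) * ∫ x in (0:ℝ)..1, x^(a+1) * (1-x)^b := by
      rw [← intervalIntegral.integral_const_mul]
      have : ∀ x : ℝ, x^(a+1)/(a+1) * -(((b:ℝ)+1) * (1-x)^b)
          = -((((b:ℝ)+1) / ((a:ℝ)+1)) * (x^(a+1) * (1-x)^b)) := by
        intro x
        have ha : ((a:ℝ)+1) ≠ 0 := by positivity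
        field_simp
      simp only [this, intervalIntegral.integral_neg] at hparts
      have := neg_injective hparts
      linarith [this]
    rw [key, ih (a+1)]
    have h1 : ((a+1)+b+1) = (a + (b+1) + 1) := by omega
    rw [h1]
    have hfa : ((a.factorial : ℝ)) ≠ 0 := by exact_mod_cast Nat.factorial_ne_zero a
    have hfab : (((a + (b+1) + 1).factorial : ℝ)) ≠ 0 := by
      exact_mod_cast Nat.factorial_ne_zero _
    have ha1 : ((a:ℝ)+1) ≠ 0 := by positivity
    rw [Nat.factorial_succ a, Nat.factorial_succ b]
    push_cast
    field_simp

open Polynomial in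
lemma q_eval_bound (n k : ℕ) (hk : k < n) :
    (derivative^[k] ((X*(1-X) : ℝ[X])^n)).eval 0 = 0 ∧
    (derivative^[k] ((X*(1-X) : ℝ[X])^n)).eval 1 = 0 := by
  obtain ⟨r, hr⟩ := pow_sub_dvd_iterate_derivative_pow (X*(1-X) : ℝ[X]) n k
  obtain ⟨j, hj⟩ : ∃ j, n - k = j + 1 := ⟨n - k - 1, by omega⟩
  rw [hj] at hr
  constructor <;> · rw [hr]; simp

open Polynomial in
lemma q_natDegree (n : ℕ) : ((X*(1-X) : ℝ[X])^n).natDegree = 2*n := by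
  rw [natDegree_pow]
  have h2 : (X*(1-X) : ℝ[X]).natDegree = 2 := by
    have : (X*(1-X) : ℝ[X]) = -(X^2) + X := by ring
    rw [this]
    compute_degree!
  rw [h2]; ring

open Polynomial in
lemma q_leadingCoeff (n : ℕ) : ((X*(1-X) : ℝ[X])^n).coeff (2*n) = (-1)^n := by
  have h := q_natDegree n
  have : ((X*(1-X) : ℝ[X])^n).coeff (2*n) = ((X*(1-X) : ℝ[X])^n).leadingCoeff := by
    rw [leadingCoeff, h]
  rw [this, leadingCoeff_pow]
  have : (X*(1-X) : ℝ[X]).leadingCoeff = -1 := by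
    have hwr : (X*(1-X) : ℝ[X]) = -(X^2 - C 1 * X) := by
      simp; ring
    rw [hwr, leadingCoeff_neg]
    have : (X^2 - C 1 * X : ℝ[X]).leadingCoeff = 1 := by
      have h1 : (X^2 - C 1 * X : ℝ[X]).natDegree = 2 := by compute_degree!
      rw [leadingCoeff, h1]
      simp [coeff_X_pow, coeff_X]
    rw [this]
  rw [this]

open Polynomial in
lemma q_top_deriv (n : ℕ) :
    derivative^[2*n] ((X*(1-X) : ℝ[X])^n) = C (((2*n).factorial : ℝ) * (-1)^n) := by
  set q : ℝ[X] := (X*(1-X))^n with hq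
  have hdeg : (derivative^[2*n] q).natDegree = 0 := by
    have := natDegree_iterate_derivative q (2*n)
    rw [q_natDegree n] at this
    omega
  have := Polynomial.eq_C_of_natDegree_le_zero (le_of_eq hdeg)
  rw [this, coeff_iterate_derivative, zero_add, Nat.descFactorial_self, q_leadingCoeff n]
  congr 1
  simp [nsmul_eq_mul]

open Polynomial in
lemma shift_integral (n : ℕ) : ∀ j ≤ n,
    (∫ x in (0:ℝ)..1, (derivative^[n] ((X*(1-X) : ℝ[X])^n)).eval x *
        (derivative^[n] ((X*(1-X) : ℝ[X])^n)).eval x)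
      = (-1)^j * ∫ x in (0:ℝ)..1, (derivative^[n-j] ((X*(1-X) : ℝ[X])^n)).eval x *
        (derivative^[n+j] ((X*(1-X) : ℝ[X])^n)).eval x := by
  intro j hj
  induction j with
  | zero => simp
  | succ j ih =>
    rw [ih (by omega)]
    set q : ℝ[X] := (X*(1-X))^n with hq
    have hnj : n - j = (n - (j+1)) + 1 := by omega
    have hiter : derivative^[n-j] q = derivative (derivative^[n-(j+1)] q) := by
      rw [hnj, Function.iterate_succ_apply']
    have hbound := q_eval_bound n (n - (j+1)) (by omega)
    have hparts := poly_parts (derivative^[n-(j+1)] q) (derivative^[n+j] q)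
      hbound.1 hbound.2
    rw [hiter, hparts]
    have : derivative (derivative^[n+j] q) = derivative^[n+(j+1)] q := by
      rw [show n + (j+1) = (n+j) + 1 by ring, Function.iterate_succ_apply']
    rw [this]
    ring

theorem pBeta_iteratedDeriv_m_norm_sq (m : ℕ) (hm : 1 ≤ m) :
    ∫ t in (0:ℝ)..1, (iteratedDeriv m (pBeta m) t)^2 =
      ((2*m-2).factorial : ℝ) * ((2*m-1).factorial : ℝ) / ((m-1).factorial : ℝ)^2 := by
  obtain ⟨n, rfl⟩ : ∃ n, m = n + 1 := ⟨m - 1, by omega⟩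
  have e1 : 2*(n+1) - 1 = 2*n + 1 := by omega
  have e2 : 2*(n+1) - 2 = 2*n := by omega
  have e3 : (n+1) - 1 = n := by omega
  rw [e1, e2, e3]
  set c : ℝ := ((2*n+1).factorial : ℝ) / ((n.factorial : ℝ))^2 with hc
  -- the derivative of pBeta
  open Polynomial in
  have hcont : Continuous (fun y : ℝ => y^n * (1-y)^n) := by continuity
  have hderiv : ∀ x : ℝ, HasDerivAt (pBeta (n+1)) (c * (x^n * (1-x)^n)) x := by
    intro x
    have h := (Continuous.deriv_integral _ hcont 0 x)
    unfold pBeta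
    simp only [e1, e3]
    have hF : ∀ y : ℝ, HasDerivAt (fun u => ∫ t in (0:ℝ)..u, t^n * (1-t)^n)
        (y^n * (1-y)^n) y := by
      intro y
      exact intervalIntegral.integral_hasDerivAt_right
        (hcont.intervalIntegrable _ _)
        (hcont.stronglyMeasurableAtFilter _ _) hcont.continuousAt
    exact (hF x).const_mul c
  open Polynomial in
  have hderiv_eq : deriv (pBeta (n+1)) = fun x => (C c * (X*(1-X))^n : ℝ[X]).eval x := by
    funext x
    rw [(hderiv x).deriv]
    simp [mul_pow]
  open Polynomial in
  have hiter : ∀ t : ℝ, iteratedDeriv (n+1) (pBeta (n+1)) t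
      = c * (derivative^[n] ((X*(1-X) : ℝ[X])^n)).eval t := by
    intro t
    rw [iteratedDeriv_succ', hderiv_eq, iteratedDeriv_polyEval,
      Polynomial.iterate_derivative_C_mul]
    simp
  have hpt : ∀ t : ℝ, (iteratedDeriv (n+1) (pBeta (n+1)) t)^2
      = c^2 * ((Polynomial.derivative^[n] ((Polynomial.X*(1-Polynomial.X) : Polynomial ℝ)^n)).eval t *
        (Polynomial.derivative^[n] ((Polynomial.X*(1-Polynomial.X) : Polynomial ℝ)^n)).eval t) := by
    intro t; rw [hiter t]; ring
  simp only [hpt]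
  rw [intervalIntegral.integral_const_mul]
  rw [shift_integral n n le_rfl]
  simp only [Nat.sub_self, Function.iterate_zero, id_eq, show n + n = 2*n from by ring]
  rw [q_top_deriv n]
  have heval : ∀ x : ℝ, ((Polynomial.X*(1-Polynomial.X) : Polynomial ℝ)^n).eval x *
      (Polynomial.C (((2*n).factorial : ℝ) * (-1)^n)).eval x
      = (((2*n).factorial : ℝ) * (-1)^n) * (x^n * (1-x)^n) := by
    intro x
    simp [mul_pow]
    ring
  simp only [heval]
  rw [intervalIntegral.integral_const_mul, beta_nat n n]
  have hnn : n + n + 1 = 2*n + 1 := by ring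
  rw [hnn]
  have hfn : ((n.factorial : ℝ)) ≠ 0 := by exact_mod_cast Nat.factorial_ne_zero n
  have hf2n1 : (((2*n+1).factorial : ℝ)) ≠ 0 := by exact_mod_cast Nat.factorial_ne_zero _
  have hsign : ((-1:ℝ))^n * (-1)^n = 1 := by
    rw [← pow_add, ← two_mul, pow_mul]; norm_num
  have hstep : ((-1:ℝ))^n * ((((2*n).factorial:ℝ) * (-1)^n) *
      ((n.factorial:ℝ) * (n.factorial:ℝ) / ((2*n+1).factorial:ℝ)))
      = ((2*n).factorial:ℝ) * ((n.factorial:ℝ) * (n.factorial:ℝ) / ((2*n+1).factorial:ℝ)) := by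
    calc ((-1:ℝ))^n * ((((2*n).factorial:ℝ) * (-1)^n) *
        ((n.factorial:ℝ) * (n.factorial:ℝ) / ((2*n+1).factorial:ℝ)))
        = ((-1:ℝ)^n * (-1)^n) * (((2*n).factorial:ℝ) *
          ((n.factorial:ℝ) * (n.factorial:ℝ) / ((2*n+1).factorial:ℝ))) := by ring
      _ = ((2*n).factorial:ℝ) * ((n.factorial:ℝ) * (n.factorial:ℝ) / ((2*n+1).factorial:ℝ)) := by
          rw [hsign, one_mul]
  rw [hstep, hc]
  field_simp
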